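/- arXiv:2202.08126 — 2 statements merged into one kernel-verified Lean document; each statement's English description precedes it below -/
import Mathlib

section
/- For every n ≥ 1, the polynomial x^{2^n − 1}(x+1)^{2^n − 1} ∈ F_2[x] is perfect, i.e., equals the sum of its monic divisors. -/
open Polynomial

/-- The sum of all monic divisors of a binary polynomial. -/
noncomputable def sigma2 (A : (ZMod 2)[X]) : (ZMod 2)[X] :=
  ∑ᶠ d ∈ {d : (ZMod 2)[X] | d.Monic ∧ d ∣ A}, d

private lemma unit_eq_one' (u : (ZMod 2)[X]) (h : IsUnit u) : u = 1 := by
  obtain ⟨r, hr, rfl⟩ := Polynomial.isUnit_iff.mp h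
  have : r = 1 := by
    have h0 := hr.ne_zero
    clear h hr
    revert r
    decide
  simp [this]

private lemma assoc_eq {a b : (ZMod 2)[X]} (h : Associated a b) : a = b := by
  obtain ⟨u, rfl⟩ := h
  rw [unit_eq_one' u.val u.isUnit, mul_one]

private lemma prime_X_add_one : Prime ((X : (ZMod 2)[X]) + 1) := by
  have := Polynomial.prime_X_sub_C (1 : ZMod 2)
  simpa [sub_eq_add_neg, CharTwo.neg_eq] using this

private lemma X_add_one_ne_zero : (X : (ZMod 2)[X]) + 1 ≠ 0 := prime_X_add_one.ne_zero

private lemma divisor_set_eq (m : ℕ) :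
    {d : (ZMod 2)[X] | d.Monic ∧ d ∣ X ^ m * (X + 1) ^ m}
      = ↑((Finset.range (m+1) ×ˢ Finset.range (m+1)).image
          (fun p : ℕ × ℕ => (X : (ZMod 2)[X]) ^ p.1 * (X + 1) ^ p.2)) := by
  ext d
  simp only [Set.mem_setOf_eq, Finset.coe_image, Set.mem_image, Finset.mem_coe,
    Finset.mem_product, Finset.mem_range]
  constructor
  · rintro ⟨hmon, hdvd⟩
    obtain ⟨k, l, hk, hl, rfl⟩ := exists_dvd_and_dvd_of_dvd_mul hdvd
    obtain ⟨i, hi, hki⟩ := (dvd_prime_pow Polynomial.prime_X m).mp hk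
    obtain ⟨j, hj, hlj⟩ := (dvd_prime_pow prime_X_add_one m).mp hl
    exact ⟨(i, j), ⟨by omega, by omega⟩, by rw [← assoc_eq hki, ← assoc_eq hlj]⟩
  · rintro ⟨⟨i, j⟩, ⟨hi, hj⟩, rfl⟩
    exact ⟨(monic_X.pow i).mul ((show ((X:(ZMod 2)[X])+1).Monic by simpa using monic_X_add_C (1 : ZMod 2)).pow j),
      mul_dvd_mul (pow_dvd_pow _ (by omega)) (pow_dvd_pow _ (by omega))⟩

private lemma F_injOn (m : ℕ) :
    Set.InjOn (fun p : ℕ × ℕ => (X : (ZMod 2)[X]) ^ p.1 * (X + 1) ^ p.2)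
      ↑(Finset.range (m+1) ×ˢ Finset.range (m+1)) := by
  rintro ⟨i, j⟩ - ⟨a, b⟩ - h
  simp only at h
  have hne : ∀ u v : ℕ, (X : (ZMod 2)[X]) ^ u * (X + 1) ^ v ≠ 0 :=
    fun u v => mul_ne_zero (pow_ne_zero _ X_ne_zero) (pow_ne_zero _ X_add_one_ne_zero)
  have hroot : ∀ u v : ℕ, rootMultiplicity 0 ((X : (ZMod 2)[X]) ^ u * (X + 1) ^ v) = u := by
    intro u v
    rw [rootMultiplicity_mul (hne u v)]
    have h1 : ((X : (ZMod 2)[X]) ^ u) = (X - C 0) ^ u := by simp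
    rw [h1, rootMultiplicity_X_sub_C_pow]
    rw [rootMultiplicity_eq_zero (by simp [IsRoot, one_ne_zero])]
    omega
  have hia : i = a := by
    have := congrArg (rootMultiplicity 0) h
    rwa [hroot, hroot] at this
  subst hia
  have hjb : j = b := by
    have := congrArg natDegree h
    simp only [natDegree_mul (pow_ne_zero _ X_ne_zero) (pow_ne_zero _ X_add_one_ne_zero),
        natDegree_mul (pow_ne_zero _ X_ne_zero) (pow_ne_zero _ X_add_one_ne_zero),
        natDegree_pow] at this
    have hd : ((X : (ZMod 2)[X]) + 1).natDegree = 1 := by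
      rw [show ((X:(ZMod 2)[X])+1) = X + C 1 by simp, natDegree_X_add_C]
    rw [hd, natDegree_X] at this
    omega
  simp [hjb]

private lemma geom_lemma (n : ℕ) {x : (ZMod 2)[X]} (hx : x + 1 ≠ 0) :
    ∑ i ∈ Finset.range (2^n), x ^ i = (x + 1) ^ (2^n - 1) := by
  apply mul_right_cancel₀ hx
  have hg := geom_sum_mul x (2^n)
  rw [show x - 1 = x + 1 by rw [sub_eq_add_neg, CharTwo.neg_eq]] at hg
  rw [hg, show x ^ (2^n) - 1 = x ^ (2^n) + 1 by rw [sub_eq_add_neg, CharTwo.neg_eq],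
    show x ^ (2^n) + 1 = (x + 1) ^ (2^n) by
      rw [add_pow_char_pow (R := (ZMod 2)[X]) (p := 2), one_pow],
    ← pow_succ]
  congr 1
  have : 1 ≤ 2^n := Nat.one_le_two_pow
  omega

theorem trivial_perfect (n : ℕ) (hn : 1 ≤ n) :
    sigma2 ((X : (ZMod 2)[X]) ^ (2 ^ n - 1) * (X + 1) ^ (2 ^ n - 1))
      = X ^ (2 ^ n - 1) * (X + 1) ^ (2 ^ n - 1) := by
  set m : ℕ := 2 ^ n - 1 with hm
  have hm1 : m + 1 = 2 ^ n := by
    have : 1 ≤ 2^n := Nat.one_le_two_pow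
    omega
  rw [sigma2, divisor_set_eq m, finsum_mem_coe_finset,
    Finset.sum_image (fun x hx y hy h => F_injOn m hx hy h)]
  rw [Finset.sum_product]
  have : ∑ i ∈ Finset.range (m+1), ∑ j ∈ Finset.range (m+1),
      (X : (ZMod 2)[X]) ^ i * (X + 1) ^ j
      = (∑ i ∈ Finset.range (m+1), (X : (ZMod 2)[X]) ^ i)
        * (∑ j ∈ Finset.range (m+1), ((X : (ZMod 2)[X]) + 1) ^ j) := by
    rw [Finset.sum_mul_sum]
  rw [this, hm1, geom_lemma n X_add_one_ne_zero,
    geom_lemma n (x := (X : (ZMod 2)[X]) + 1) (by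
      rw [add_assoc, CharTwo.add_self_eq_zero 1, add_zero]
      exact X_ne_zero)]
  rw [show ((X : (ZMod 2)[X]) + 1 + 1) = X by
      rw [add_assoc, CharTwo.add_self_eq_zero 1, add_zero]]
  rw [mul_comm]
end

section
/- The polynomial T_5 = x^4(x+1)^4(x^4+x^3+x^2+x+1)(x^4+x^3+1) ∈ F_2[x] is perfect: σ(T_5) = T_5. -/
open Polynomial

lemma monic_of_ne_zero {p : (ZMod 2)[X]} (h : p ≠ 0) : p.Monic := by
  have := Polynomial.leadingCoeff_ne_zero.mpr h
  unfold Polynomial.Monic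
  revert this; generalize p.leadingCoeff = a; revert a; decide

lemma zmod2_cases (z : ZMod 2) : z = 0 ∨ z = 1 := by revert z; decide

lemma eq_quadratic {a : (ZMod 2)[X]} (hm : a.Monic) (hd : a.natDegree = 2) :
    a = X^2 + C (a.coeff 1) * X + C (a.coeff 0) := by
  have h2 : a.coeff 2 = 1 := by have := hm.coeff_natDegree; rwa [hd] at this
  conv_lhs => rw [a.as_sum_range_C_mul_X_pow]
  rw [hd]
  rw [Finset.sum_range_succ, Finset.sum_range_succ, Finset.sum_range_succ,
    Finset.sum_range_zero, h2, map_one]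
  ring

lemma eq_linear {a : (ZMod 2)[X]} (hm : a.Monic) (hd : a.natDegree = 1) :
    a = X + C (a.coeff 0) := hm.eq_X_add_C hd

lemma irred4 {f : (ZMod 2)[X]} (hm : f.Monic) (hdeg : f.natDegree = 4)
    (h0 : f.eval 0 ≠ 0) (h1 : f.eval 1 ≠ 0)
    (hq : ¬ ((X^2 + X + 1 : (ZMod 2)[X]) ∣ f)) : Irreducible f := by
  have hf0 : f ≠ 0 := hm.ne_zero
  have noroot : ∀ c : ZMod 2, ¬ ((X + C c) ∣ f) := by
    intro c hc
    have : X + C c = X - C c := by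
      rw [sub_eq_add_neg, CharTwo.neg_eq]
    rw [this, dvd_iff_isRoot] at hc
    rcases zmod2_cases c with rfl | rfl
    · exact h0 hc
    · exact h1 hc
  have nolin : ∀ a : (ZMod 2)[X], a.Monic → a.natDegree = 1 → ¬ (a ∣ f) := by
    intro a hma hda hdvd
    rw [eq_linear hma hda] at hdvd
    exact noroot _ hdvd
  have noquad : ∀ a : (ZMod 2)[X], a.Monic → a.natDegree = 2 → ¬ (a ∣ f) := by
    intro a hma hda hdvd
    rw [eq_quadratic hma hda] at hdvd
    rcases zmod2_cases (a.coeff 1) with e1 | e1 <;> rcases zmod2_cases (a.coeff 0) with e0 | e0 <;>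
      rw [e1, e0] at hdvd <;> simp only [map_zero, map_one, zero_mul, one_mul, add_zero] at hdvd
    · -- X^2 ∣ f, so X ∣ f
      exact noroot 0 (by simpa using (dvd_pow_self (X : (ZMod 2)[X]) two_ne_zero).trans hdvd)
    · -- X^2 + 1 = (X+1)^2
      have : (X^2 + 1 : (ZMod 2)[X]) = (X+1)^2 := by
        have h2 : (2 : (ZMod 2)[X]) = 0 := CharTwo.two_eq_zero
        linear_combination (-X) * h2
      rw [this] at hdvd
      exact noroot 1 (by simpa using (dvd_pow_self (X + 1 : (ZMod 2)[X]) two_ne_zero).trans hdvd)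
    · -- X^2 + X = X(X+1)
      have : (X^2 + X : (ZMod 2)[X]) = X * (X+1) := by ring
      rw [this] at hdvd
      exact noroot 0 (by simpa using (dvd_mul_right (X:(ZMod 2)[X]) (X+1)).trans hdvd)
    · exact hq (by simpa using hdvd)
  constructor
  · intro hu
    have := hm.eq_one_of_isUnit hu
    rw [this] at hdeg; simp at hdeg
  · intro a b hab
    have ha0 : a ≠ 0 := by rintro rfl; simp at hab; exact hf0 hab
    have hb0 : b ≠ 0 := by rintro rfl; simp at hab; exact hf0 hab
    have hma := monic_of_ne_zero ha0
    have hmb := monic_of_ne_zero hb0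
    have hsum : a.natDegree + b.natDegree = 4 := by
      rw [← Polynomial.natDegree_mul ha0 hb0, ← hab, hdeg]
    have hdvda : a ∣ f := ⟨b, hab⟩
    have hdvdb : b ∣ f := ⟨a, by rw [hab]; ring⟩
    have hub : a.natDegree ≤ 4 := by omega
    interval_cases h : a.natDegree
    · left; exact hma.natDegree_eq_zero.mp h ▸ isUnit_one
    · exact absurd hdvda (nolin a hma h)
    · exact absurd hdvda (noquad a hma h)
    · exact absurd hdvdb (nolin b hmb (by omega))
    · right
      have : b.natDegree = 0 := by omega
      exact hmb.natDegree_eq_zero.mp this ▸ isUnit_one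

noncomputable def PP : (ZMod 2)[X] := X^4+X^3+X^2+X+1
noncomputable def QQ : (ZMod 2)[X] := X^4+X^3+1

lemma h2' : (2 : (ZMod 2)[X]) = 0 := CharTwo.two_eq_zero

lemma PP_monic : PP.Monic := by unfold PP; monicity!
lemma QQ_monic : QQ.Monic := by unfold QQ; monicity!
lemma PP_deg : PP.natDegree = 4 := by unfold PP; compute_degree!
lemma QQ_deg : QQ.natDegree = 4 := by unfold QQ; compute_degree!

lemma A_deg : ((X:(ZMod 2)[X])^2+X+1).natDegree = 2 := by compute_degree!
lemma A_ne : ((X:(ZMod 2)[X])^2+X+1) ≠ 0 := by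
  intro h; have := congrArg (fun g => Polynomial.coeff g 0) h; simp [coeff_X_pow] at this

lemma quad_factor {f : (ZMod 2)[X]} (hf : f.Monic) (hd : f.natDegree = 4)
    (hdvd : ((X:(ZMod 2)[X])^2+X+1) ∣ f) :
    ∃ c e : ZMod 2, f = (X^2+X+1) * (X^2 + C c * X + C e) := by
  obtain ⟨b, hb⟩ := hdvd
  have hb0 : b ≠ 0 := by rintro rfl; rw [mul_zero] at hb; exact hf.ne_zero hb
  have hmb : b.Monic := monic_of_ne_zero hb0
  have hdb : b.natDegree = 2 := by
    have := Polynomial.natDegree_mul A_ne hb0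
    rw [← hb, hd, A_deg] at this; omega
  exact ⟨b.coeff 1, b.coeff 0, by rw [hb]; congr 1; exact eq_quadratic hmb hdb⟩

lemma PP_irred : Irreducible PP := by
  apply irred4 PP_monic PP_deg
  · unfold PP; simp
  · unfold PP; simp; decide
  · intro hdvd
    obtain ⟨c, e, hb⟩ := quad_factor PP_monic PP_deg hdvd
    unfold PP at hb
    rcases zmod2_cases c with rfl | rfl <;> rcases zmod2_cases e with rfl | rfl <;>
        simp only [map_zero, map_one, zero_mul, one_mul, add_zero] at hb
    · rw [show ((X:(ZMod 2)[X])^2+X+1) * (X^2) = X^4+X^3+X^2 by ring] at hb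
      have := congrArg (fun g => Polynomial.coeff g 0) hb; simp [coeff_X_pow] at this
    · rw [show ((X:(ZMod 2)[X])^2+X+1) * (X^2+1) = X^4+X^3+X+1 by linear_combination X^2*h2'] at hb
      have := congrArg (fun g => Polynomial.coeff g 2) hb; simp [coeff_X_pow, coeff_one] at this
    · rw [show ((X:(ZMod 2)[X])^2+X+1) * (X^2+X) = X^4+X by linear_combination (X^3+X^2)*h2'] at hb
      have := congrArg (fun g => Polynomial.coeff g 0) hb; simp [coeff_X_pow] at this
    · rw [show ((X:(ZMod 2)[X])^2+X+1) * (X^2+X+1) = X^4+X^2+1 by linear_combination (X^3+X^2+X)*h2'] at hb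
      have := congrArg (fun g => Polynomial.coeff g 1) hb; simp [coeff_X_pow, coeff_one] at this

lemma QQ_irred : Irreducible QQ := by
  apply irred4 QQ_monic QQ_deg
  · unfold QQ; simp
  · unfold QQ; simp; decide
  · intro hdvd
    obtain ⟨c, e, hb⟩ := quad_factor QQ_monic QQ_deg hdvd
    unfold QQ at hb
    rcases zmod2_cases c with rfl | rfl <;> rcases zmod2_cases e with rfl | rfl <;>
        simp only [map_zero, map_one, zero_mul, one_mul, add_zero] at hb
    · rw [show ((X:(ZMod 2)[X])^2+X+1) * (X^2) = X^4+X^3+X^2 by ring] at hb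
      have := congrArg (fun g => Polynomial.coeff g 2) hb; simp [coeff_X_pow, coeff_one] at this
    · rw [show ((X:(ZMod 2)[X])^2+X+1) * (X^2+1) = X^4+X^3+X+1 by linear_combination X^2*h2'] at hb
      have := congrArg (fun g => Polynomial.coeff g 1) hb; simp [coeff_X_pow, coeff_one] at this
    · rw [show ((X:(ZMod 2)[X])^2+X+1) * (X^2+X) = X^4+X by linear_combination (X^3+X^2)*h2'] at hb
      have := congrArg (fun g => Polynomial.coeff g 3) hb; simp [coeff_X_pow, coeff_one, coeff_X] at this
    · rw [show ((X:(ZMod 2)[X])^2+X+1) * (X^2+X+1) = X^4+X^2+1 by linear_combination (X^3+X^2+X)*h2'] at hb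
      have := congrArg (fun g => Polynomial.coeff g 3) hb; simp [coeff_X_pow, coeff_one, coeff_X] at this

lemma prime_X1 : Prime (X + 1 : (ZMod 2)[X]) := by
  have : (X - C (1:ZMod 2)) = X + 1 := by rw [map_one, sub_eq_add_neg, CharTwo.neg_eq]
  rw [← this]
  exact (Polynomial.irreducible_X_sub_C (1:ZMod 2)).prime

lemma dvd_pow_classify {p : (ZMod 2)[X]} (hp : Prime p) (hmp : p.Monic) {n : ℕ}
    {d : (ZMod 2)[X]} (hd : d ∣ p^n) (hm : d.Monic) : ∃ i ≤ n, d = p^i := by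
  obtain ⟨i, hi, ha⟩ := (dvd_prime_pow hp n).mp hd
  exact ⟨i, hi, Polynomial.eq_of_monic_of_associated hm (hmp.pow i) ha⟩

lemma classify {d : (ZMod 2)[X]} (hm : d.Monic)
    (hd : d ∣ X^4 * (X+1)^4 * PP * QQ) :
    ∃ a b c e : ℕ, a ≤ 4 ∧ b ≤ 4 ∧ c ≤ 1 ∧ e ≤ 1 ∧ d = X^a * (X+1)^b * PP^c * QQ^e := by
  obtain ⟨u, v, hu, hv, huv⟩ := exists_dvd_and_dvd_of_dvd_mul hd
  obtain ⟨u1, u2, hu1, hu2, hu12⟩ := exists_dvd_and_dvd_of_dvd_mul hu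
  obtain ⟨w1, w2, hw1, hw2, hw12⟩ := exists_dvd_and_dvd_of_dvd_mul hu1
  have hd0 : d ≠ 0 := hm.ne_zero
  rw [huv, hu12, hw12] at hd0 hm ⊢
  have h1 : w1 ≠ 0 := by rintro rfl; simp at hd0
  have h2 : w2 ≠ 0 := by rintro rfl; simp at hd0
  have h3 : u2 ≠ 0 := by rintro rfl; simp at hd0
  have h4 : v ≠ 0 := by rintro rfl; simp at hd0
  obtain ⟨a, ha, rfl⟩ := dvd_pow_classify prime_X monic_X hw1 (monic_of_ne_zero h1)
  obtain ⟨b, hb, rfl⟩ := dvd_pow_classify prime_X1 (by monicity!) hw2 (monic_of_ne_zero h2)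
  obtain ⟨c, hc, rfl⟩ := dvd_pow_classify PP_irred.prime PP_monic (n:=1) (by rw [pow_one]; exact hu2) (monic_of_ne_zero h3)
  obtain ⟨e, he, rfl⟩ := dvd_pow_classify QQ_irred.prime QQ_monic (n:=1) (by rw [pow_one]; exact hv) (monic_of_ne_zero h4)
  exact ⟨a, b, c, e, ha, hb, hc, he, rfl⟩

lemma X_ne : (X : (ZMod 2)[X]) ≠ 0 := X_ne_zero
lemma X1_ne : (X + 1 : (ZMod 2)[X]) ≠ 0 := by
  intro h; have := congrArg (fun g => Polynomial.coeff g 0) h; simp at this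
lemma PP_ne : PP ≠ 0 := PP_monic.ne_zero
lemma QQ_ne : QQ ≠ 0 := QQ_monic.ne_zero

lemma PP_ne_one : PP ≠ 1 := by
  intro h; have := congrArg (fun g => Polynomial.coeff g 2) h
  unfold PP at this; simp [coeff_X_pow, coeff_one, coeff_X] at this
lemma QQ_ne_one : QQ ≠ 1 := by
  intro h; have := congrArg (fun g => Polynomial.coeff g 3) h
  unfold QQ at this; simp [coeff_X_pow, coeff_one, coeff_X] at this
lemma PP_ne_QQ : PP ≠ QQ := by
  intro h; have := congrArg (fun g => Polynomial.coeff g 2) h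
  unfold PP QQ at this; simp [coeff_X_pow, coeff_one, coeff_X] at this

lemma X1_eq : (X + 1 : (ZMod 2)[X]) = X - C 1 := by
  rw [map_one, sub_eq_add_neg, CharTwo.neg_eq]

lemma rm_pow_zero {z : ZMod 2} {g : (ZMod 2)[X]} (hg : eval z g ≠ 0) (n : ℕ) :
    rootMultiplicity z (g^n) = 0 :=
  rootMultiplicity_eq_zero (by simp only [IsRoot, eval_pow]; exact pow_ne_zero _ hg)

lemma rmX (n : ℕ) : rootMultiplicity (0 : ZMod 2) ((X:(ZMod 2)[X])^n) = n := by
  have := rootMultiplicity_X_sub_C_pow (0 : ZMod 2) n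
  simpa using this

lemma rmX1 (n : ℕ) : rootMultiplicity (1 : ZMod 2) ((X+1:(ZMod 2)[X])^n) = n := by
  have := rootMultiplicity_X_sub_C_pow (1 : ZMod 2) n
  rw [← X1_eq] at this; exact this

lemma e0P : eval 0 PP ≠ 0 := by unfold PP; simp
lemma e1P : eval 1 PP ≠ 0 := by unfold PP; simp; decide
lemma e0Q : eval 0 QQ ≠ 0 := by unfold QQ; simp
lemma e1Q : eval 1 QQ ≠ 0 := by unfold QQ; simp; decide
lemma e0X1 : eval 0 (X+1 : (ZMod 2)[X]) ≠ 0 := by simp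
lemma e1X : eval 1 (X : (ZMod 2)[X]) ≠ 0 := by simp

lemma inj {a b c e a' b' c' e' : ℕ} (hc : c ≤ 1) (he : e ≤ 1) (hc' : c' ≤ 1) (he' : e' ≤ 1)
    (h : X^a*(X+1)^b*PP^c*QQ^e = X^a'*(X+1)^b'*PP^c'*QQ^e') :
    a = a' ∧ b = b' ∧ c = c' ∧ e = e' := by
  have hne : ∀ a b c e : ℕ, (X:(ZMod 2)[X])^a*(X+1)^b*PP^c*QQ^e ≠ 0 := fun a b c e =>
    mul_ne_zero (mul_ne_zero (mul_ne_zero (pow_ne_zero _ X_ne) (pow_ne_zero _ X1_ne))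
      (pow_ne_zero _ PP_ne)) (pow_ne_zero _ QQ_ne)
  have rm : ∀ (z : ZMod 2) (a b c e : ℕ),
      rootMultiplicity z (X^a*(X+1)^b*PP^c*QQ^e) =
        rootMultiplicity z ((X:(ZMod 2)[X])^a) + rootMultiplicity z ((X+1:(ZMod 2)[X])^b)
        + rootMultiplicity z (PP^c) + rootMultiplicity z (QQ^e) := by
    intro z a b c e
    rw [rootMultiplicity_mul (hne a b c e),
      rootMultiplicity_mul (mul_ne_zero (mul_ne_zero (pow_ne_zero _ X_ne) (pow_ne_zero _ X1_ne)) (pow_ne_zero _ PP_ne)),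
      rootMultiplicity_mul (mul_ne_zero (pow_ne_zero _ X_ne) (pow_ne_zero _ X1_ne))]
  have ha : a = a' := by
    have h0 := congrArg (rootMultiplicity 0) h
    rw [rm, rm, rmX, rmX,
      rm_pow_zero e0X1 b, rm_pow_zero e0X1 b',
      rm_pow_zero e0P c, rm_pow_zero e0P c',
      rm_pow_zero e0Q e, rm_pow_zero e0Q e'] at h0
    omega
  have hb : b = b' := by
    have h1 := congrArg (rootMultiplicity 1) h
    rw [rm, rm, rmX1, rmX1,
      rm_pow_zero e1X a, rm_pow_zero e1X a',
      rm_pow_zero e1P c, rm_pow_zero e1P c',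
      rm_pow_zero e1Q e, rm_pow_zero e1Q e'] at h1
    omega
  subst ha hb
  have hcancel : PP^c*QQ^e = PP^c'*QQ^e' := by
    have hx : (X:(ZMod 2)[X])^a*(X+1)^b ≠ 0 :=
      mul_ne_zero (pow_ne_zero _ X_ne) (pow_ne_zero _ X1_ne)
    apply mul_left_cancel₀ hx
    linear_combination h
  refine ⟨rfl, rfl, ?_⟩
  interval_cases c <;> interval_cases e <;> interval_cases c' <;> interval_cases e' <;>
    simp only [pow_zero, pow_one, one_mul, mul_one] at hcancel <;>
    first
    | exact ⟨rfl, rfl⟩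
    | exact absurd hcancel QQ_ne_one
    | exact absurd hcancel.symm QQ_ne_one
    | exact absurd hcancel PP_ne_one
    | exact absurd hcancel.symm PP_ne_one
    | exact absurd hcancel PP_ne_QQ
    | exact absurd hcancel.symm PP_ne_QQ
    | exact absurd (IsUnit.of_mul_eq_one _ hcancel) PP_irred.not_isUnit
    | exact absurd (IsUnit.of_mul_eq_one _ hcancel.symm) PP_irred.not_isUnit
    | exact absurd (mul_left_cancel₀ PP_ne (hcancel.trans (mul_one PP).symm)) QQ_ne_one
    | exact absurd (mul_left_cancel₀ PP_ne (hcancel.symm.trans (mul_one PP).symm)) QQ_ne_one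
    | exact absurd (mul_right_cancel₀ QQ_ne (hcancel.trans (one_mul QQ).symm)) PP_ne_one
    | exact absurd (mul_right_cancel₀ QQ_ne (hcancel.symm.trans (one_mul QQ).symm)) PP_ne_one

lemma X1_monic : (X + 1 : (ZMod 2)[X]).Monic := by monicity!

theorem T5_perfect :
    sigma2 ((X : (ZMod 2)[X]) ^ 4 * (X + 1) ^ 4
        * (X ^ 4 + X ^ 3 + X ^ 2 + X + 1) * (X ^ 4 + X ^ 3 + 1))
      = X ^ 4 * (X + 1) ^ 4 * (X ^ 4 + X ^ 3 + X ^ 2 + X + 1) * (X ^ 4 + X ^ 3 + 1) := by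
  have hPP : (X ^ 4 + X ^ 3 + X ^ 2 + X + 1 : (ZMod 2)[X]) = PP := rfl
  have hQQ : (X ^ 4 + X ^ 3 + 1 : (ZMod 2)[X]) = QQ := rfl
  rw [hPP, hQQ]
  set f : ℕ × ℕ × ℕ × ℕ → (ZMod 2)[X] :=
    fun t => X^t.1 * (X+1)^t.2.1 * PP^t.2.2.1 * QQ^t.2.2.2 with hf
  set s : Finset (ℕ × ℕ × ℕ × ℕ) :=
    (Finset.range 5) ×ˢ (Finset.range 5) ×ˢ (Finset.range 2) ×ˢ (Finset.range 2) with hs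
  have hset : {d : (ZMod 2)[X] | d.Monic ∧ d ∣ X^4*(X+1)^4*PP*QQ} = ↑(s.image f) := by
    ext d
    simp only [Set.mem_setOf_eq, Finset.coe_image, Set.mem_image, Finset.mem_coe,
      hs, Finset.mem_product, Finset.mem_range]
    constructor
    · rintro ⟨hm, hd⟩
      obtain ⟨a, b, c, e, ha, hb, hc, he, rfl⟩ := classify hm hd
      refine ⟨(a, b, c, e), ?_, rfl⟩
      exact ⟨Nat.lt_succ_of_le ha, Nat.lt_succ_of_le hb, Nat.lt_succ_of_le hc, Nat.lt_succ_of_le he⟩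
    · rintro ⟨⟨a, b, c, e⟩, ⟨ha, hb, hc, he⟩, rfl⟩
      refine ⟨(((monic_X_pow a).mul (X1_monic.pow b)).mul (PP_monic.pow c)).mul
        (QQ_monic.pow e), ?_⟩
      have h3 : PP^c ∣ PP := by
        have := pow_dvd_pow PP (Nat.lt_succ_iff.mp hc); rwa [pow_one] at this
      have h4 : QQ^e ∣ QQ := by
        have := pow_dvd_pow QQ (Nat.lt_succ_iff.mp he); rwa [pow_one] at this
      exact mul_dvd_mul (mul_dvd_mul (mul_dvd_mul
        (pow_dvd_pow X (Nat.lt_succ_iff.mp ha)) (pow_dvd_pow _ (Nat.lt_succ_iff.mp hb))) h3) h4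
  have hinj : ∀ x ∈ s, ∀ y ∈ s, f x = f y → x = y := by
    rintro ⟨a, b, c, e⟩ hx ⟨a', b', c', e'⟩ hy hfe
    simp only [hs, Finset.mem_product, Finset.mem_range] at hx hy
    simp only [hf] at hfe
    obtain ⟨hxa, hxb, hxc, hxe⟩ := hx
    obtain ⟨hya, hyb, hyc, hye⟩ := hy
    obtain ⟨h1, h2, h3, h4⟩ := inj (Nat.lt_succ_iff.mp hxc) (Nat.lt_succ_iff.mp hxe)
      (Nat.lt_succ_iff.mp hyc) (Nat.lt_succ_iff.mp hye) hfe
    subst h1; subst h2; subst h3; subst h4; rfl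
  rw [show sigma2 (X^4*(X+1)^4*PP*QQ) = ∑ᶠ d ∈ {d : (ZMod 2)[X] | d.Monic ∧ d ∣ X^4*(X+1)^4*PP*QQ}, d from rfl,
    hset, finsum_mem_coe_finset, Finset.sum_image hinj]
  rw [hs]
  rw [Finset.sum_product, hf]
  simp only [Finset.sum_product]
  simp only [Finset.sum_range_succ, Finset.sum_range_zero]
  unfold PP QQ
  have h2 := h2'
  linear_combination (10+35*X+70*X^2+110*X^3+159*X^4+203*X^5+226*X^6+228*X^7+215*X^8+182*X^9+134*X^10+87*X^11+50*X^12+23*X^13+7*X^14+X^15) * h2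
end
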